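/- Let n ≥ 2 be an integer and δ ∈ (1/2, 1]. Then sup over positive integers m and X ∈ C'(n, m) of P( {max_{1 ≤ i < j ≤ n} |X_i − X_j| ≥ δ} ∩ A ) is at most sup over (H, L) ∈ Λ(n) of λ({x ∈ [0,∞) : H(x) ≥ L(x) + δ}), where λ is Lebesgue measure. -/

import Mathlib

open MeasureTheory
open scoped ENNReal

noncomputable section

/-- A right-continuous step function on `[0, ∞)` with finitely many steps. -/
def IsRCStep (f : ℝ → ℝ) : Prop :=
  ∃ (k : ℕ) (t : Fin (k + 1) → ℝ) (c : Fin (k + 1) → ℝ),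
    t 0 = 0 ∧ StrictMono t ∧
    (∀ i : Fin k, ∀ x ∈ Set.Ico (t i.castSucc) (t i.succ), f x = c i.castSucc) ∧
    (∀ x ∈ Set.Ici (t (Fin.last k)), f x = c (Fin.last k))

/-- The class `Λ(k)` of pairs of functions `(H, L) : [0, ∞) → [0, 1]²`. -/
def Lam (k : ℕ) (H L : ℝ → ℝ) : Prop :=
  (∀ x ∈ Set.Ici (0 : ℝ), 0 ≤ L x ∧ L x ≤ 1 / 2 ∧ 1 / 2 ≤ H x ∧ H x ≤ 1) ∧
  IsRCStep H ∧ IsRCStep L ∧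
  volume ({x | 1 / 2 < H x} ∩ Set.Ici 0) + volume ({x | L x < 1 / 2} ∩ Set.Ici 0) ≤
    (k : ℝ≥0∞) / 2 ∧
  ∀ y ∈ Set.Ioc (0 : ℝ) 1,
    ENNReal.ofReal ((1 - y) / y) *
        (volume ({x | H x = y} ∩ Set.Ici 0) + volume ({x | L x = y} ∩ Set.Ici 0)) =
      volume ({x | H x = 1 - y} ∩ Set.Ici 0) + volume ({x | L x = 1 - y} ∩ Set.Ici 0)

/-- The class `Λ^δ(k)`. -/
def LamDelta (δ : ℝ) (k : ℕ) (H L : ℝ → ℝ) : Prop :=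
  Lam k H L ∧
  {x ∈ Set.Ici (0 : ℝ) | H x ∈ Set.Ioo (1 / 2) δ} = ∅ ∧
  {x ∈ Set.Ici (0 : ℝ) | L x ∈ Set.Ioo (1 - δ) (1 / 2)} = ∅ ∧
  {x ∈ Set.Ici (0 : ℝ) | L x + δ ≤ H x} = {x ∈ Set.Ici (0 : ℝ) | L x < 1 / 2}

/-- The event that some pair of the variables differ by at least `δ`. -/
def maxEvent {Ω : Type} {n : ℕ} (X : Fin n → Ω → ℝ) (δ : ℝ) : Set Ω :=
  {ω | ∃ i j : Fin n, i < j ∧ δ ≤ |X i ω - X j ω|}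

/-- `X` is coherent with associated event `A`. -/
def CoherentWith {Ω : Type} [mΩ : MeasurableSpace Ω] (P : Measure Ω) {n : ℕ}
    (X : Fin n → Ω → ℝ) (A : Set Ω) : Prop :=
  ∃ G : Fin n → MeasurableSpace Ω, (∀ i, G i ≤ mΩ) ∧ MeasurableSet A ∧
    ∀ i, X i =ᵐ[P] P[A.indicator (fun _ => (1 : ℝ)) | G i]

/-- `X ∈ C(n, m)` with associated event `A`. -/
def MemCWith {Ω : Type} [mΩ : MeasurableSpace Ω] (P : Measure Ω) {n : ℕ}
    (X : Fin n → Ω → ℝ) (A : Set Ω) (m : ℕ) : Prop :=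
  CoherentWith P X A ∧ ∀ j, ∃ s : Finset ℝ, s.card ≤ m ∧ ∀ᵐ ω ∂P, X j ω ∈ s

/-- `X ∈ C'(n, m)` with associated event `A`. -/
def MemC'With {Ω : Type} [mΩ : MeasurableSpace Ω] (P : Measure Ω) {n : ℕ}
    (X : Fin n → Ω → ℝ) (A : Set Ω) (m : ℕ) : Prop :=
  MemCWith P X A m ∧ P A = 1 / 2 ∧
    ∀ x ∈ Set.Ioc (0 : ℝ) 1,
      (1 - x) / x * ∑ i : Fin n, (P ({ω | X i ω = x} ∩ A)).toReal =
        ∑ i : Fin n, (P ({ω | X i ω = 1 - x} ∩ A)).toReal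

namespace StepGadget

/-- piecewise step function from a list of (length, value) pairs, tail value 1/2. -/
def psf : List (ℝ × ℝ) → ℝ → ℝ
  | [], _ => 1/2
  | (l, v) :: r, x => if x < l then v else psf r (x - l)

lemma psf_measurable (segs : List (ℝ × ℝ)) : Measurable (psf segs) := by
  induction segs with
  | nil => exact measurable_const
  | cons p r ih =>
      obtain ⟨l, v⟩ := p
      exact Measurable.ite (measurableSet_lt measurable_id measurable_const)
        measurable_const (ih.comp (measurable_id.sub_const l))

lemma psf_prop (pred : ℝ → Prop) (h : pred (1/2)) :
    ∀ (segs : List (ℝ × ℝ)), (∀ p ∈ segs, pred p.2) → ∀ x, pred (psf segs x) := by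
  intro segs
  induction segs with
  | nil => intro _ x; exact h
  | cons p r ih =>
      intro hs x
      obtain ⟨l, v⟩ := p
      show pred (if x < l then v else psf r (x - l))
      split
      · exact hs (l, v) (List.mem_cons_self)
      · exact ih (fun q hq => hs q (List.mem_cons_of_mem _ hq)) _

lemma psf_level (pred : ℝ → Prop) [DecidablePred pred] (hmp : MeasurableSet {y | pred y})
    (hy : ¬ pred (1/2)) :
    ∀ (segs : List (ℝ × ℝ)), (∀ p ∈ segs, 0 ≤ p.1) →
    volume ({x | pred (psf segs x)} ∩ Set.Ici 0) =
      ENNReal.ofReal ((segs.map fun p => if pred p.2 then p.1 else 0).sum) := by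
  intro segs
  induction segs with
  | nil =>
      intro _
      have : {x : ℝ | pred (psf [] x)} ∩ Set.Ici 0 = ∅ := by
        ext x
        exact iff_of_false (fun h => hy h.1) (Set.notMem_empty x)
      simp [this]
  | cons p r ih =>
      intro hl
      obtain ⟨l, v⟩ := p
      have hl0 : 0 ≤ l := hl (l, v) (List.mem_cons_self)
      have hlr : ∀ q ∈ r, 0 ≤ q.1 := fun q hq => hl q (List.mem_cons_of_mem _ hq)
      have hset : {x | pred (psf ((l, v) :: r) x)} ∩ Set.Ici 0 =
          ((if pred v then Set.Ico (0:ℝ) l else ∅) ∪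
            ((fun x => x - l) ⁻¹' ({x | pred (psf r x)} ∩ Set.Ici 0))) := by
        ext x
        constructor
        · rintro ⟨hx, hx0⟩
          simp only [Set.mem_setOf_eq, psf] at hx
          by_cases hxl : x < l
          · rw [if_pos hxl] at hx
            left; rw [if_pos hx]; exact ⟨hx0, hxl⟩
          · rw [if_neg hxl] at hx
            right
            exact ⟨hx, by simp only [Set.mem_Ici, sub_nonneg]; linarith [not_lt.mp hxl]⟩
        · intro hx
          rcases hx with hx | hx
          · split at hx
            · rcases hx with ⟨hx0, hxl⟩
              refine ⟨?_, hx0⟩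
              simp only [Set.mem_setOf_eq, psf, if_pos hxl]
              assumption
            · exact absurd hx (Set.notMem_empty x)
          · rcases hx with ⟨hx, hx0⟩
            simp only [Set.mem_preimage, Set.mem_Ici, sub_nonneg] at hx0 ⊢
            refine ⟨?_, le_trans hl0 hx0⟩
            simp only [Set.mem_setOf_eq, psf, if_neg (not_lt.mpr hx0)]
            exact hx
      rw [hset]
      have hmr : MeasurableSet ({x | pred (psf r x)} ∩ Set.Ici 0) :=
        ((psf_measurable r) hmp).inter measurableSet_Ici
      have hdisj : Disjoint (if pred v then Set.Ico (0:ℝ) l else ∅)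
          ((fun x => x - l) ⁻¹' ({x | pred (psf r x)} ∩ Set.Ici 0)) := by
        refine Set.disjoint_left.mpr ?_
        intro x hx hx'
        have h1 : x < l := by
          split at hx
          · exact hx.2
          · exact absurd hx (Set.notMem_empty x)
        have h2 : (0:ℝ) ≤ x - l := hx'.2
        linarith
      rw [measure_union hdisj ((measurable_id.sub_const l) hmr)]
      have hpre : volume ((fun x => x - l) ⁻¹' ({x | pred (psf r x)} ∩ Set.Ici 0)) =
          volume ({x | pred (psf r x)} ∩ Set.Ici 0) := by
        simp only [sub_eq_add_neg]
        exact measure_preimage_add_right volume (-l) _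
      rw [hpre, ih hlr]
      have hsum : (0:ℝ) ≤ ((r.map fun p => if pred p.2 then p.1 else 0).sum) := by
        apply List.sum_nonneg
        intro a ha
        simp only [List.mem_map] at ha
        obtain ⟨q, hq, rfl⟩ := ha
        split
        · exact hlr q hq
        · exact le_refl 0
      simp only [List.map_cons, List.sum_cons]
      by_cases hpv : pred v
      · rw [if_pos hpv, if_pos hpv, Real.volume_Ico, sub_zero,
          ENNReal.ofReal_add hl0 hsum]
      · rw [if_neg hpv, if_neg hpv, measure_empty, zero_add, zero_add]

lemma isRCStep_congr {f g : ℝ → ℝ} (hfg : ∀ x ∈ Set.Ici (0:ℝ), f x = g x)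
    (hg : IsRCStep g) : IsRCStep f := by
  obtain ⟨k, t, c, ht0, htm, hpc, hlast⟩ := hg
  refine ⟨k, t, c, ht0, htm, ?_, ?_⟩
  · intro i x hx
    have hx0 : (0:ℝ) ≤ x := by
      have := htm.monotone (Fin.zero_le i.castSucc)
      rw [ht0] at this
      exact le_trans this hx.1
    rw [hfg x hx0]
    exact hpc i x hx
  · intro x hx
    have hx0 : (0:ℝ) ≤ x := by
      have := htm.monotone (Fin.zero_le (Fin.last k))
      rw [ht0] at this
      exact le_trans this hx
    rw [hfg x hx0]
    exact hlast x hx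

lemma psf_isRCStep : ∀ (segs : List (ℝ × ℝ)), (∀ p ∈ segs, 0 ≤ p.1) →
    IsRCStep (psf segs) := by
  intro segs
  induction segs with
  | nil =>
      intro _
      refine ⟨0, fun _ => 0, fun _ => 1/2, rfl, ?_, ?_, ?_⟩
      · intro a b hab
        exact absurd hab (by omega)
      · intro i; exact absurd i.2 (by omega)
      · intro x _; rfl
  | cons p r ih =>
      intro hl
      obtain ⟨l, v⟩ := p
      have hl0 : 0 ≤ l := hl (l, v) (List.mem_cons_self)
      have hlr : ∀ q ∈ r, 0 ≤ q.1 := fun q hq => hl q (List.mem_cons_of_mem _ hq)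
      rcases eq_or_lt_of_le hl0 with hl0' | hl0'
      · -- length zero: agrees with psf r on Ici 0
        refine isRCStep_congr ?_ (ih hlr)
        intro x hx
        show (if x < l then v else psf r (x - l)) = psf r x
        rw [if_neg (by rw [← hl0']; exact not_lt.mpr hx), ← hl0', sub_zero]
      · obtain ⟨k, t, c, ht0, htm, hpc, hlast⟩ := ih hlr
        have ht_nonneg : ∀ j, 0 ≤ t j := by
          intro j
          have := htm.monotone (Fin.zero_le j)
          rwa [ht0] at this
        refine ⟨k + 1, Fin.cons 0 (fun j => l + t j), Fin.cons v c, rfl, ?_, ?_, ?_⟩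
        · rw [Fin.strictMono_iff_lt_succ]
          intro i
          induction i using Fin.cases with
          | zero =>
              rw [Fin.castSucc_zero, Fin.cons_zero, Fin.cons_succ, ht0, add_zero]
              exact hl0'
          | succ j =>
              rw [← Fin.succ_castSucc, Fin.cons_succ, Fin.cons_succ]
              exact (add_lt_add_iff_left l).mpr (htm Fin.castSucc_lt_succ)
        · intro i x hx
          induction i using Fin.cases with
          | zero =>
              rw [Fin.castSucc_zero, Fin.cons_zero, Fin.cons_succ, ht0, add_zero] at hx
              rw [Fin.castSucc_zero, Fin.cons_zero]
              show (if x < l then v else psf r (x - l)) = v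
              rw [if_pos hx.2]
          | succ j =>
              rw [← Fin.succ_castSucc, Fin.cons_succ, Fin.cons_succ] at hx
              rw [← Fin.succ_castSucc, Fin.cons_succ]
              have hx1 : ¬ x < l := by
                have := hx.1
                have h2 := ht_nonneg j.castSucc
                push_neg
                linarith
              show (if x < l then v else psf r (x - l)) = c j.castSucc
              rw [if_neg hx1]
              exact hpc j (x - l) ⟨by linarith [hx.1], by linarith [hx.2]⟩
        · intro x hx
          have hlast' : Fin.last (k+1) = (Fin.last k).succ := rfl
          rw [hlast', Fin.cons_succ] at hx ⊢
          have hx1 : ¬ x < l := by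
            have h2 := ht_nonneg (Fin.last k)
            simp only [Set.mem_Ici] at hx
            push_neg
            linarith
          show (if x < l then v else psf r (x - l)) = c (Fin.last k)
          rw [if_neg hx1]
          exact hlast (x - l) (by simp only [Set.mem_Ici] at hx ⊢; linarith)

def sumLen (segs : List (ℝ × ℝ × ℝ)) : ℝ := (segs.map fun p => p.1).sum

lemma psf_pair : ∀ (a : List (ℝ × ℝ × ℝ)) (b : List (ℝ × ℝ × ℝ)) (x : ℝ),
    (∀ p ∈ a, 0 ≤ p.1) → 0 ≤ x → x < sumLen a →
    ∃ p ∈ a, psf ((a ++ b).map fun q => (q.1, q.2.1)) x = p.2.1 ∧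
      psf ((a ++ b).map fun q => (q.1, q.2.2)) x = p.2.2 := by
  intro a
  induction a with
  | nil =>
      intro b x _ hx hxs
      exact absurd (lt_of_le_of_lt hx hxs) (by simp [sumLen])
  | cons p r ih =>
      intro b x hl hx hxs
      obtain ⟨l, v, w⟩ := p
      by_cases hxl : x < l
      · refine ⟨(l, v, w), List.mem_cons_self, ?_, ?_⟩
        · show (if x < l then v else _) = v
          rw [if_pos hxl]
        · show (if x < l then w else _) = w
          rw [if_pos hxl]
      · have hxs' : x - l < sumLen r := by
          simp only [sumLen, List.map_cons, List.sum_cons] at hxs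
          simp only [sumLen]
          linarith
        obtain ⟨q, hq, h1, h2⟩ := ih b (x - l)
          (fun q hq => hl q (List.mem_cons_of_mem _ hq))
          (by push_neg at hxl; linarith) hxs'
        refine ⟨q, List.mem_cons_of_mem _ hq, ?_, ?_⟩
        · show (if x < l then v else _) = q.2.1
          rw [if_neg hxl]; exact h1
        · show (if x < l then w else _) = q.2.2
          rw [if_neg hxl]; exact h2

end StepGadget

namespace Helper


variable {Ω : Type} [MeasurableSpace Ω] (P : Measure Ω) [IsFiniteMeasure P]

lemma sum_toReal_biUnion {α : Type*} (F : Finset α) (E : α → Set Ω)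
    (hm : ∀ a ∈ F, MeasurableSet (E a)) (hd : (F : Set α).PairwiseDisjoint E) :
    ∑ a ∈ F, (P (E a)).toReal = (P (⋃ a ∈ F, E a)).toReal := by
  rw [measure_biUnion_finset hd hm]
  exact (ENNReal.toReal_sum (fun a _ => measure_ne_top P _)).symm

lemma union_toReal_le {n : ℕ} (E : Fin n → Set Ω) :
    (P (⋃ i, E i)).toReal ≤ ∑ i, (P (E i)).toReal := by
  refine le_trans (ENNReal.toReal_mono ?_ (measure_iUnion_fintype_le P E)) ?_
  · exact (ENNReal.sum_lt_top.mpr (fun a _ => measure_lt_top P _)).ne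
  · rw [ENNReal.toReal_sum (fun a _ => measure_ne_top P _)]

end Helper

section KeyLemma

open StepGadget Helper

variable {Ω : Type} [mΩ : MeasurableSpace Ω]

lemma key_lemma (n : ℕ) (hn : 2 ≤ n) (δ : ℝ) (hδ : δ ∈ Set.Ioc (1 / 2 : ℝ) 1)
    (P : Measure Ω) [IsProbabilityMeasure P] (m : ℕ) (X : Fin n → Ω → ℝ) (A : Set Ω)
    (hC : MemC'With P X A m) :
    ∃ H L : ℝ → ℝ, Lam n H L ∧
      (P (maxEvent X δ ∩ A)).toReal ≤
        (volume ({x | L x + δ ≤ H x} ∩ Set.Ici 0)).toReal := by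
  classical
  obtain ⟨⟨⟨G, hG, hA, hXY⟩, hFin⟩, hPA, hbal⟩ := hC
  have hδ1 : (1/2 : ℝ) < δ := hδ.1
  have hδ2 : δ ≤ 1 := hδ.2
  set Y : Fin n → Ω → ℝ := fun i => P[A.indicator (fun _ => (1 : ℝ)) | G i] with hYdef
  have hind_int : Integrable (A.indicator fun _ => (1 : ℝ)) P :=
    (integrable_const 1).indicator hA
  have hYsm : ∀ i, StronglyMeasurable[G i] (Y i) := fun i => stronglyMeasurable_condExp
  have hYmeas : ∀ i, Measurable (Y i) :=
    fun i => ((hYsm i).mono (hG i)).measurable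
  -- a.e. bounds
  have hY0 : ∀ i, ∀ᵐ ω ∂P, 0 ≤ Y i ω := by
    intro i
    exact condExp_nonneg (Filter.Eventually.of_forall fun ω =>
      Set.indicator_nonneg (fun _ _ => zero_le_one) ω)
  have hY1 : ∀ i, ∀ᵐ ω ∂P, Y i ω ≤ 1 := by
    intro i
    have h1 : Y i ≤ᵐ[P] P[(fun _ => (1:ℝ)) | G i] := by
      refine condExp_mono hind_int (integrable_const 1)
        (Filter.Eventually.of_forall fun ω => ?_)
      by_cases hω : ω ∈ A
      · simp [Set.indicator_of_mem hω]
      · simp [Set.indicator_of_notMem hω]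
    have h2 : P[(fun _ => (1:ℝ)) | G i] = fun _ => (1:ℝ) := condExp_const (hG i) 1
    filter_upwards [h1] with ω hω
    rw [h2] at hω
    exact hω
  -- level sets of Y at 0 intersected with A are null
  have hYze : ∀ i, P ({ω | Y i ω = 0} ∩ A) = 0 := by
    intro i
    have hSG : MeasurableSet[G i] {ω | Y i ω = 0} :=
      (hYsm i).measurable (measurableSet_singleton 0)
    have hSm : MeasurableSet {ω | Y i ω = 0} := hG i _ hSG
    have h1 : ∫ ω in {ω | Y i ω = 0}, Y i ω ∂P =
        ∫ ω in {ω | Y i ω = 0}, A.indicator (fun _ => (1:ℝ)) ω ∂P :=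
      setIntegral_condExp (hG i) hind_int hSG
    have h2 : ∫ ω in {ω | Y i ω = 0}, Y i ω ∂P = 0 := by
      rw [setIntegral_congr_fun hSm (fun ω hω => hω)]
      simp
    have h3 : ∫ ω in {ω | Y i ω = 0}, A.indicator (fun _ => (1:ℝ)) ω ∂P =
        (P ({ω | Y i ω = 0} ∩ A)).toReal := by
      rw [setIntegral_indicator hA, setIntegral_const, smul_eq_mul, mul_one]; rfl
    rw [h2] at h1
    have h4 : (P ({ω | Y i ω = 0} ∩ A)).toReal = 0 := by rw [← h3, ← h1]
    exact ((ENNReal.toReal_eq_zero_iff _).mp h4).resolve_right (measure_ne_top P _)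
  -- finitely many values
  choose sf hsf1 hsf2 using hFin
  set s : Finset ℝ := Finset.biUnion Finset.univ sf with hsdef
  have hYs : ∀ i, ∀ᵐ ω ∂P, Y i ω ∈ s := by
    intro i
    filter_upwards [hsf2 i, hXY i] with ω h1 h2
    have h2' : Y i ω = X i ω := h2.symm
    rw [h2']
    exact Finset.mem_biUnion.mpr ⟨i, Finset.mem_univ i, h1⟩
  -- nu
  set ν : ℝ → ℝ := fun y => ∑ i : Fin n, (P ({ω | Y i ω = y} ∩ A)).toReal with hνdef
  have hνX : ∀ y, ∑ i : Fin n, (P ({ω | X i ω = y} ∩ A)).toReal = ν y := by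
    intro y
    refine Finset.sum_congr rfl fun i _ => ?_
    congr 1
    refine measure_congr (Filter.eventuallyEq_set.mpr ?_)
    filter_upwards [hXY i] with ω hω
    have hω' : X i ω = Y i ω := hω
    simp only [Set.mem_inter_iff, Set.mem_setOf_eq, hω']
  have hνnn : ∀ y, 0 ≤ ν y := fun y =>
    Finset.sum_nonneg fun i _ => ENNReal.toReal_nonneg
  have hν0 : ν 0 = 0 := by
    rw [hνdef]
    refine Finset.sum_eq_zero fun i _ => ?_
    rw [hYze i]
    simp
  have hν_not_s : ∀ y, y ∉ s → ν y = 0 := by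
    intro y hy
    refine Finset.sum_eq_zero fun i _ => ?_
    have : P ({ω | Y i ω = y} ∩ A) = 0 := by
      refine measure_mono_null (fun ω hω => ?_) (ae_iff.mp (hYs i))
      simp only [Set.mem_setOf_eq]
      rw [hω.1.out]
      exact hy
    rw [this]; simp
  have hbalY : ∀ y ∈ Set.Ioc (0:ℝ) 1, (1 - y)/y * ν y = ν (1 - y) := by
    intro y hy
    rw [← hνX y, ← hνX (1 - y)]
    exact hbal y hy
  -- the event B
  set B : Set Ω := maxEvent Y δ ∩ A with hBdef
  have hmaxmeas : MeasurableSet (maxEvent Y δ) := by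
    have : maxEvent Y δ = ⋃ i, ⋃ j, ⋃ (_ : i < j), {ω | δ ≤ |Y i ω - Y j ω|} := by
      ext ω
      simp only [maxEvent, Set.mem_setOf_eq, Set.mem_iUnion]
      constructor
      · rintro ⟨i, j, hij, h⟩; exact ⟨i, j, hij, h⟩
      · rintro ⟨i, j, hij, h⟩; exact ⟨i, j, hij, h⟩
    rw [this]
    refine MeasurableSet.iUnion fun i => MeasurableSet.iUnion fun j =>
      MeasurableSet.iUnion fun _ => ?_
    exact measurableSet_le measurable_const (((hYmeas i).sub (hYmeas j)).abs)
  have hBmeas : MeasurableSet B := hmaxmeas.inter hA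
  have hPBX : P (maxEvent X δ ∩ A) = P B := by
    refine measure_congr (Filter.eventuallyEq_set.mpr ?_)
    have hall : ∀ᵐ ω ∂P, ∀ i, X i ω = Y i ω := ae_all_iff.mpr fun i => hXY i
    filter_upwards [hall] with ω hω
    simp only [hBdef, maxEvent, Set.mem_inter_iff, Set.mem_setOf_eq, hω]
  -- vectors
  have hFinNe : Nonempty (Fin n) := ⟨⟨0, by omega⟩⟩
  have hne : (Finset.univ : Finset (Fin n)).Nonempty := Finset.univ_nonempty
  set mx : (Fin n → ℝ) → ℝ := fun v => Finset.univ.sup' hne v with hmxdef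
  set mn : (Fin n → ℝ) → ℝ := fun v => Finset.univ.inf' hne v with hmndef
  have hmx_mem : ∀ v, ∃ i, mx v = v i := by
    intro v
    obtain ⟨i, _, hi⟩ := Finset.exists_mem_eq_sup' hne v
    exact ⟨i, hi⟩
  have hmn_mem : ∀ v, ∃ i, mn v = v i := by
    intro v
    obtain ⟨i, _, hi⟩ := Finset.exists_mem_eq_inf' hne v
    exact ⟨i, hi⟩
  have hle_mx : ∀ v i, v i ≤ mx v := fun v i => Finset.le_sup' v (Finset.mem_univ i)
  have hmn_le : ∀ v i, mn v ≤ v i := fun v i => Finset.inf'_le v (Finset.mem_univ i)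
  set V : Finset (Fin n → ℝ) :=
    (Fintype.piFinset fun _ => s).filter
      (fun v => (∃ i j, i < j ∧ δ ≤ |v i - v j|) ∧ ∀ i, 0 < v i ∧ v i ≤ 1) with hVdef
  have hVs : ∀ v ∈ V, ∀ i, v i ∈ s := by
    intro v hv i
    exact Fintype.mem_piFinset.mp (Finset.mem_filter.mp hv).1 i
  have hVprop : ∀ v ∈ V, (∃ i j, i < j ∧ δ ≤ |v i - v j|) ∧ ∀ i, 0 < v i ∧ v i ≤ 1 :=
    fun v hv => (Finset.mem_filter.mp hv).2
  have hV_gap : ∀ v ∈ V, mn v + δ ≤ mx v := by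
    intro v hv
    obtain ⟨⟨i, j, _, habs⟩, _⟩ := hVprop v hv
    rcases le_abs.mp habs with h | h
    · calc mn v + δ ≤ v j + δ := by linarith [hmn_le v j]
        _ ≤ v i := by linarith
        _ ≤ mx v := hle_mx v i
    · calc mn v + δ ≤ v i + δ := by linarith [hmn_le v i]
        _ ≤ v j := by linarith
        _ ≤ mx v := hle_mx v j
  set sH : Finset ℝ := s.filter (fun z => 1/2 < z ∧ z ≤ 1) with hsHdef
  set sL : Finset ℝ := s.filter (fun z => 0 < z ∧ z < 1/2) with hsLdef
  have hmx_mem_sH : ∀ v ∈ V, mx v ∈ sH := by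
    intro v hv
    obtain ⟨i, hi⟩ := hmx_mem v
    obtain ⟨i0, hi0⟩ := hmn_mem v
    refine Finset.mem_filter.mpr ⟨by rw [hi]; exact hVs v hv i, ?_, ?_⟩
    · have h1 := hV_gap v hv
      have h2 : 0 < mn v := by rw [hi0]; exact ((hVprop v hv).2 i0).1
      linarith
    · rw [hi]; exact ((hVprop v hv).2 i).2
  have hmn_mem_sL : ∀ v ∈ V, mn v ∈ sL := by
    intro v hv
    obtain ⟨i, hi⟩ := hmn_mem v
    obtain ⟨i1, hi1⟩ := hmx_mem v
    refine Finset.mem_filter.mpr ⟨by rw [hi]; exact hVs v hv i, ?_, ?_⟩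
    · rw [hi]; exact ((hVprop v hv).2 i).1
    · have h1 := hV_gap v hv
      have h2 : mx v ≤ 1 := by rw [hi1]; exact ((hVprop v hv).2 i1).2
      linarith
  -- the pieces of B
  set Bv : (Fin n → ℝ) → Set Ω := fun v => {ω | ∀ i, Y i ω = v i} ∩ B with hBvdef
  have hBv_meas : ∀ v, MeasurableSet (Bv v) := by
    intro v
    refine MeasurableSet.inter ?_ hBmeas
    have : {ω | ∀ i, Y i ω = v i} = ⋂ i, (Y i) ⁻¹' {v i} := by
      ext ω; simp [Set.mem_iInter]
    rw [this]
    exact MeasurableSet.iInter fun i => (hYmeas i) (measurableSet_singleton _)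
  have hBv_disj : ∀ v w : Fin n → ℝ, v ≠ w → Disjoint (Bv v) (Bv w) := by
    intro v w hvw
    refine Set.disjoint_left.mpr fun ω hv hw => hvw (funext fun i => ?_)
    rw [← hv.1 i, ← hw.1 i]
  set β : (Fin n → ℝ) → ℝ := fun v => (P (Bv v)).toReal with hβdef
  have hβnn : ∀ v, 0 ≤ β v := fun v => ENNReal.toReal_nonneg
  have hgood : ∀ᵐ ω ∂P, ∀ i, Y i ω ∈ s ∧ 0 ≤ Y i ω ∧ Y i ω ≤ 1 ∧
      ¬(Y i ω = 0 ∧ ω ∈ A) := by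
    refine ae_all_iff.mpr fun i => ?_
    have h4 : ∀ᵐ ω ∂P, ¬(Y i ω = 0 ∧ ω ∈ A) := by
      have := measure_eq_zero_iff_ae_notMem.mp (hYze i)
      filter_upwards [this] with ω hω
      intro ⟨h1, h2⟩
      exact hω ⟨h1, h2⟩
    filter_upwards [hYs i, hY0 i, hY1 i, h4] with ω h1 h2 h3 h4
    exact ⟨h1, h2, h3, h4⟩
  have hβB : ∑ v ∈ V, β v = (P B).toReal := by
    rw [hβdef]
    simp only
    rw [sum_toReal_biUnion P V Bv (fun v _ => hBv_meas v)
      (fun v _ w _ hvw => hBv_disj v w hvw)]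
    congr 1
    refine le_antisymm (measure_mono (Set.iUnion₂_subset fun v _ => Set.inter_subset_right)) ?_
    refine measure_mono_ae ?_
    filter_upwards [hgood] with ω hω hB
    have hvV : (fun i => Y i ω) ∈ V := by
      refine Finset.mem_filter.mpr ⟨Fintype.mem_piFinset.mpr fun i => (hω i).1, ?_, ?_⟩
      · obtain ⟨i, j, hij, h⟩ := hB.1
        exact ⟨i, j, hij, h⟩
      · intro i
        refine ⟨?_, (hω i).2.2.1⟩
        rcases lt_or_eq_of_le (hω i).2.1 with h | h
        · exact h
        · exact absurd ⟨h.symm, hB.2⟩ (hω i).2.2.2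
    exact Set.mem_biUnion hvV ⟨fun i => rfl, hB⟩
  -- the leftover masses
  set ρH : ℝ → ℝ := fun z => ν z - ∑ v ∈ V.filter (fun v => mx v = z), β v with hρHdef
  set ρL : ℝ → ℝ := fun z => ν z - ∑ v ∈ V.filter (fun v => mn v = z), β v with hρLdef
  have hfiber_le : ∀ (f : (Fin n → ℝ) → ℝ) (z : ℝ),
      (∀ v ∈ V, f v = z → ∃ i, v i = z) →
      ∑ v ∈ V.filter (fun v => f v = z), β v ≤ ν z := by
    intro f z hwit
    rw [sum_toReal_biUnion P _ Bv (fun v _ => hBv_meas v)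
      (fun v _ w _ hvw => hBv_disj v w hvw)]
    refine le_trans (le_trans ?_ (union_toReal_le P (fun i => {ω | Y i ω = z} ∩ A))) ?_
    · refine ENNReal.toReal_mono ?_ (measure_mono ?_)
      · exact measure_ne_top P _
      · refine Set.iUnion₂_subset fun v hv => ?_
        obtain ⟨hvV, hfz⟩ := Finset.mem_filter.mp hv
        obtain ⟨i, hi⟩ := hwit v hvV hfz
        intro ω hω
        refine Set.mem_iUnion.mpr ⟨i, ?_, hω.2.2⟩
        show Y i ω = z
        rw [hω.1 i, hi]
    · exact le_of_eq rfl
  have hρH_nn : ∀ z, 0 ≤ ρH z := by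
    intro z
    have := hfiber_le mx z (fun v hv hz => by
      obtain ⟨i, hi⟩ := hmx_mem v; exact ⟨i, by rw [← hi, hz]⟩)
    rw [hρHdef]
    simp only [sub_nonneg]
    exact this
  have hρL_nn : ∀ z, 0 ≤ ρL z := by
    intro z
    have := hfiber_le mn z (fun v hv hz => by
      obtain ⟨i, hi⟩ := hmn_mem v; exact ⟨i, by rw [← hi, hz]⟩)
    rw [hρLdef]
    simp only [sub_nonneg]
    exact this
  -- the segment list
  set segsB : List (ℝ × ℝ × ℝ) := V.toList.map (fun v => (β v, mx v, mn v)) with hsegsB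
  set segsHl : List (ℝ × ℝ × ℝ) := sH.toList.map (fun z => (ρH z, z, 1/2)) with hsegsH
  set segsLl : List (ℝ × ℝ × ℝ) := sL.toList.map (fun z => (ρL z, 1/2, z)) with hsegsL
  set segs : List (ℝ × ℝ × ℝ) := segsB ++ (segsHl ++ segsLl) with hsegs
  have hseg : ∀ q ∈ segs, 0 ≤ q.1 ∧ 1/2 ≤ q.2.1 ∧ q.2.1 ≤ 1 ∧ 0 ≤ q.2.2 ∧ q.2.2 ≤ 1/2 := by
    intro q hq
    rw [hsegs] at hq
    rcases List.mem_append.mp hq with hq | hq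
    · rw [hsegsB] at hq
      obtain ⟨v, hv, rfl⟩ := List.mem_map.mp hq
      have hvV : v ∈ V := Finset.mem_toList.mp hv
      have h1 := Finset.mem_filter.mp (hmx_mem_sH v hvV)
      have h2 := Finset.mem_filter.mp (hmn_mem_sL v hvV)
      exact ⟨hβnn v, le_of_lt h1.2.1, h1.2.2, le_of_lt h2.2.1, le_of_lt h2.2.2⟩
    rcases List.mem_append.mp hq with hq | hq
    · rw [hsegsH] at hq
      obtain ⟨z, hz, rfl⟩ := List.mem_map.mp hq
      have hzH := Finset.mem_filter.mp (Finset.mem_toList.mp hz)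
      refine ⟨hρH_nn z, le_of_lt hzH.2.1, hzH.2.2, by norm_num, le_refl _⟩
    · rw [hsegsL] at hq
      obtain ⟨z, hz, rfl⟩ := List.mem_map.mp hq
      have hzL := Finset.mem_filter.mp (Finset.mem_toList.mp hz)
      refine ⟨hρL_nn z, le_refl _, by norm_num, le_of_lt hzL.2.1, le_of_lt hzL.2.2⟩
  have hsegH_len : ∀ p ∈ segs.map (fun q => (q.1, q.2.1)), 0 ≤ p.1 := by
    intro p hp
    obtain ⟨q, hq, rfl⟩ := List.mem_map.mp hp
    exact (hseg q hq).1
  have hsegL_len : ∀ p ∈ segs.map (fun q => (q.1, q.2.2)), 0 ≤ p.1 := by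
    intro p hp
    obtain ⟨q, hq, rfl⟩ := List.mem_map.mp hp
    exact (hseg q hq).1
  set Hf : ℝ → ℝ := psf (segs.map (fun q => (q.1, q.2.1))) with hHf
  set Lf : ℝ → ℝ := psf (segs.map (fun q => (q.1, q.2.2))) with hLf
  -- generic sum computation
  have hsum_gen : ∀ (sel : ℝ × ℝ × ℝ → ℝ × ℝ) (w : ℝ × ℝ → ℝ),
      ((segs.map sel).map w).sum =
        (∑ v ∈ V, w (sel (β v, mx v, mn v))) +
          ((∑ z ∈ sH, w (sel (ρH z, z, 1/2))) + (∑ z ∈ sL, w (sel (ρL z, 1/2, z)))) := by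
    intro sel w
    rw [hsegs, hsegsB, hsegsH, hsegsL]
    simp only [List.map_append, List.sum_append, List.map_map, Finset.sum_map_toList]
    rfl
  -- level volumes
  have hlev : ∀ y : ℝ, 0 ≤ y → y ≤ 1 → y ≠ 1/2 →
      volume ({x | Hf x = y} ∩ Set.Ici 0) + volume ({x | Lf x = y} ∩ Set.Ici 0) =
        ENNReal.ofReal (ν y) := by
    intro y hy0 hy1 hyh
    have hmp : MeasurableSet {t : ℝ | t = y} := by
      rw [Set.setOf_eq_eq_singleton]
      exact measurableSet_singleton y
    have hH := psf_level (fun t => t = y) hmp (fun h => hyh h.symm)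
      (segs.map (fun q => (q.1, q.2.1))) hsegH_len
    have hL := psf_level (fun t => t = y) hmp (fun h => hyh h.symm)
      (segs.map (fun q => (q.1, q.2.2))) hsegL_len
    rw [← hHf] at hH
    rw [← hLf] at hL
    rw [hH, hL, hsum_gen, hsum_gen]
    simp only
    by_cases hcase : 1/2 < y
    · -- H carries the mass
      have e1 : (∑ v ∈ V, if mx v = y then β v else 0) =
          ∑ v ∈ V.filter (fun v => mx v = y), β v := (Finset.sum_filter _ _).symm
      have e2 : (∑ z ∈ sH, if z = y then ρH z else 0) = if y ∈ sH then ρH y else 0 :=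
        Finset.sum_ite_eq' sH y ρH
      have e3 : (∑ z ∈ sL, if (1/2 : ℝ) = y then ρL z else 0) = 0 :=
        Finset.sum_eq_zero fun z _ => if_neg fun h => hyh h.symm
      have e4 : (∑ v ∈ V, if mn v = y then β v else 0) = 0 :=
        Finset.sum_eq_zero fun v hv => if_neg (by
          have := (Finset.mem_filter.mp (hmn_mem_sL v hv)).2.2
          intro h; rw [h] at this; linarith)
      have e5 : (∑ z ∈ sH, if z = y then (1/2 : ℝ) else 0) =
          if y ∈ sH then (1/2 : ℝ) else 0 := Finset.sum_ite_eq' sH y _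
      have e5' : (∑ z ∈ sH, if (1/2 : ℝ) = y then (0:ℝ) else 0) = 0 := by simp
      have e6 : (∑ z ∈ sL, if z = y then ρL z else 0) = 0 :=
        Finset.sum_eq_zero fun z hz => if_neg (by
          have := (Finset.mem_filter.mp hz).2.2
          intro h; rw [h] at this; linarith)
      have e5'' : (∑ z ∈ sH, if (1/2 : ℝ) = y then ρH z else 0) = 0 :=
        Finset.sum_eq_zero fun z _ => if_neg fun h => hyh h.symm
      rw [e1, e2, e3, e4, e5'', e6]
      by_cases hmem : y ∈ sH
      · rw [if_pos hmem]
        have harith : (∑ v ∈ V.filter (fun v => mx v = y), β v) + (ρH y + 0) = ν y := by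
          simp only [hρHdef]
          ring
        rw [harith]
        simp
      · rw [if_neg hmem]
        have hz1 : (∑ v ∈ V.filter (fun v => mx v = y), β v) = 0 := by
          refine Finset.sum_eq_zero fun v hv => ?_
          obtain ⟨hvV, hvy⟩ := Finset.mem_filter.mp hv
          exact absurd (hvy ▸ hmx_mem_sH v hvV) hmem
        have hz2 : ν y = 0 := by
          refine hν_not_s y fun hys => hmem ?_
          exact Finset.mem_filter.mpr ⟨hys, hcase, hy1⟩
        rw [hz1, hz2]
        simp
    · -- y < 1/2
      have hylt : y < 1/2 := lt_of_le_of_ne (not_lt.mp hcase) hyh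
      have e1 : (∑ v ∈ V, if mx v = y then β v else 0) = 0 :=
        Finset.sum_eq_zero fun v hv => if_neg (by
          have := (Finset.mem_filter.mp (hmx_mem_sH v hv)).2.1
          intro h; rw [h] at this; linarith)
      have e2 : (∑ z ∈ sH, if z = y then ρH z else 0) = 0 :=
        Finset.sum_eq_zero fun z hz => if_neg (by
          have := (Finset.mem_filter.mp hz).2.1
          intro h; rw [h] at this; linarith)
      have e3 : (∑ z ∈ sL, if (1/2 : ℝ) = y then ρL z else 0) = 0 :=
        Finset.sum_eq_zero fun z _ => if_neg fun h => hyh h.symm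
      have e5'' : (∑ z ∈ sH, if (1/2 : ℝ) = y then ρH z else 0) = 0 :=
        Finset.sum_eq_zero fun z _ => if_neg fun h => hyh h.symm
      have e4 : (∑ v ∈ V, if mn v = y then β v else 0) =
          ∑ v ∈ V.filter (fun v => mn v = y), β v := (Finset.sum_filter _ _).symm
      have e6 : (∑ z ∈ sL, if z = y then ρL z else 0) = if y ∈ sL then ρL y else 0 :=
        Finset.sum_ite_eq' sL y ρL
      rw [e1, e2, e3, e4, e5'', e6]
      by_cases hmem : y ∈ sL
      · rw [if_pos hmem]
        have harith : (∑ v ∈ V.filter (fun v => mn v = y), β v) + (0 + ρL y) = ν y := by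
          simp only [hρLdef]
          ring
        rw [harith]
        simp
      · rw [if_neg hmem]
        have hz1 : (∑ v ∈ V.filter (fun v => mn v = y), β v) = 0 := by
          refine Finset.sum_eq_zero fun v hv => ?_
          obtain ⟨hvV, hvy⟩ := Finset.mem_filter.mp hv
          exact absurd (hvy ▸ hmn_mem_sL v hvV) hmem
        have hz2 : ν y = 0 := by
          rcases eq_or_lt_of_le hy0 with h | h
          · rw [← h]; exact hν0
          · exact hν_not_s y fun hys => hmem (Finset.mem_filter.mpr ⟨hys, h, hylt⟩)
        rw [hz1, hz2]
        simp
  -- pointwise bounds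
  have hHb : ∀ x, 1/2 ≤ Hf x ∧ Hf x ≤ 1 := by
    rw [hHf]
    refine psf_prop (fun t => 1/2 ≤ t ∧ t ≤ 1) (by norm_num) _ ?_
    intro p hp
    obtain ⟨q, hq, rfl⟩ := List.mem_map.mp hp
    exact ⟨(hseg q hq).2.1, (hseg q hq).2.2.1⟩
  have hLb : ∀ x, 0 ≤ Lf x ∧ Lf x ≤ 1/2 := by
    rw [hLf]
    refine psf_prop (fun t => 0 ≤ t ∧ t ≤ 1/2) (by norm_num) _ ?_
    intro p hp
    obtain ⟨q, hq, rfl⟩ := List.mem_map.mp hp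
    exact ⟨(hseg q hq).2.2.2.1, (hseg q hq).2.2.2.2⟩
  -- condition (3)
  have hfibH : ∑ z ∈ sH, ∑ v ∈ V.filter (fun v => mx v = z), β v = ∑ v ∈ V, β v :=
    Finset.sum_fiberwise_of_maps_to hmx_mem_sH β
  have hfibL : ∑ z ∈ sL, ∑ v ∈ V.filter (fun v => mn v = z), β v = ∑ v ∈ V, β v :=
    Finset.sum_fiberwise_of_maps_to hmn_mem_sL β
  have hHpart : (∑ v ∈ V, β v) + ((∑ z ∈ sH, ρH z) + 0) = ∑ z ∈ sH, ν z := by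
    simp only [hρHdef]
    rw [Finset.sum_sub_distrib, hfibH]
    ring
  have hLpart : (∑ v ∈ V, β v) + (0 + (∑ z ∈ sL, ρL z)) = ∑ z ∈ sL, ν z := by
    simp only [hρLdef]
    rw [Finset.sum_sub_distrib, hfibL]
    ring
  have hdisjHL : Disjoint sH sL := by
    refine Finset.disjoint_left.mpr fun z hz hz' => ?_
    have h1 := (Finset.mem_filter.mp hz).2.1
    have h2 := (Finset.mem_filter.mp hz').2.2
    linarith
  have hνtot : (∑ z ∈ sH, ν z) + (∑ z ∈ sL, ν z) ≤ (n : ℝ)/2 := by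
    rw [← Finset.sum_union hdisjHL]
    have hswap : ∑ z ∈ sH ∪ sL, ν z =
        ∑ i : Fin n, ∑ z ∈ sH ∪ sL, (P ({ω | Y i ω = z} ∩ A)).toReal := by
      rw [hνdef]
      exact Finset.sum_comm
    rw [hswap]
    have hinner : ∀ i : Fin n, ∑ z ∈ sH ∪ sL, (P ({ω | Y i ω = z} ∩ A)).toReal ≤ 1/2 := by
      intro i
      rw [sum_toReal_biUnion P _ (fun z => {ω | Y i ω = z} ∩ A)
        (fun z _ => ((hYmeas i) (measurableSet_singleton z)).inter hA)
        (fun z _ w _ hzw => Set.disjoint_left.mpr fun ω h1 h2 =>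
          hzw (by rw [← h1.1.out, ← h2.1.out]))]
      have : (P (⋃ z ∈ sH ∪ sL, ({ω | Y i ω = z} ∩ A))).toReal ≤ (P A).toReal :=
        ENNReal.toReal_mono (measure_ne_top P A)
          (measure_mono (Set.iUnion₂_subset fun z _ => Set.inter_subset_right))
      refine le_trans this ?_
      rw [hPA]
      rw [ENNReal.toReal_div]
      simp
    calc ∑ i : Fin n, ∑ z ∈ sH ∪ sL, (P ({ω | Y i ω = z} ∩ A)).toReal
        ≤ ∑ _i : Fin n, (1/2 : ℝ) := Finset.sum_le_sum fun i _ => hinner i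
      _ = (n : ℝ)/2 := by
          rw [Finset.sum_const, Finset.card_univ, Fintype.card_fin, nsmul_eq_mul]
          ring
  have hcond3 : volume ({x | 1/2 < Hf x} ∩ Set.Ici 0) +
      volume ({x | Lf x < 1/2} ∩ Set.Ici 0) ≤ (n : ℝ≥0∞)/2 := by
    have hH := psf_level (fun t => 1/2 < t) measurableSet_Ioi (by norm_num)
      (segs.map (fun q => (q.1, q.2.1))) hsegH_len
    have hL := psf_level (fun t => t < 1/2) measurableSet_Iio (by norm_num)
      (segs.map (fun q => (q.1, q.2.2))) hsegL_len
    rw [← hHf] at hH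
    rw [← hLf] at hL
    rw [hH, hL, hsum_gen, hsum_gen]
    simp only
    have e1 : (∑ v ∈ V, if 1/2 < mx v then β v else 0) = ∑ v ∈ V, β v :=
      Finset.sum_congr rfl fun v hv =>
        if_pos (Finset.mem_filter.mp (hmx_mem_sH v hv)).2.1
    have e2 : (∑ z ∈ sH, if 1/2 < z then ρH z else 0) = ∑ z ∈ sH, ρH z :=
      Finset.sum_congr rfl fun z hz => if_pos (Finset.mem_filter.mp hz).2.1
    have e3 : (∑ z ∈ sL, if (1/2:ℝ) < 1/2 then ρL z else 0) = 0 := by simp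
    have e4 : (∑ v ∈ V, if mn v < 1/2 then β v else 0) = ∑ v ∈ V, β v :=
      Finset.sum_congr rfl fun v hv =>
        if_pos (Finset.mem_filter.mp (hmn_mem_sL v hv)).2.2
    have e5 : (∑ z ∈ sH, if (1/2:ℝ) < 1/2 then ρH z else 0) = 0 := by simp
    have e6 : (∑ z ∈ sL, if z < 1/2 then ρL z else 0) = ∑ z ∈ sL, ρL z :=
      Finset.sum_congr rfl fun z hz => if_pos (Finset.mem_filter.mp hz).2.2
    rw [e1, e2, e3, e4, e5, e6, hHpart, hLpart]
    have hnn1 : 0 ≤ ∑ z ∈ sH, ν z := Finset.sum_nonneg fun z _ => hνnn z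
    have hnn2 : 0 ≤ ∑ z ∈ sL, ν z := Finset.sum_nonneg fun z _ => hνnn z
    rw [← ENNReal.ofReal_add hnn1 hnn2]
    calc ENNReal.ofReal ((∑ z ∈ sH, ν z) + (∑ z ∈ sL, ν z))
        ≤ ENNReal.ofReal ((n:ℝ)/2) := ENNReal.ofReal_le_ofReal hνtot
      _ = (n : ℝ≥0∞)/2 := by
          rw [ENNReal.ofReal_div_of_pos (by norm_num), ENNReal.ofReal_natCast]
          norm_num
  -- condition (4)
  have hcond4 : ∀ y ∈ Set.Ioc (0:ℝ) 1,
      ENNReal.ofReal ((1 - y) / y) *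
          (volume ({x | Hf x = y} ∩ Set.Ici 0) + volume ({x | Lf x = y} ∩ Set.Ici 0)) =
        volume ({x | Hf x = 1 - y} ∩ Set.Ici 0) + volume ({x | Lf x = 1 - y} ∩ Set.Ici 0) := by
    intro y hy
    by_cases hy2 : y = 1/2
    · subst hy2
      norm_num
    · rw [hlev y hy.1.le hy.2 hy2,
        hlev (1 - y) (by linarith [hy.2]) (by linarith [hy.1]) (fun h => hy2 (by linarith)),
        ← ENNReal.ofReal_mul (div_nonneg (by linarith [hy.2]) hy.1.le)]
      rw [hbalY y hy]
  -- the event bound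
  have hsumlenB : sumLen segsB = (P B).toReal := by
    rw [hsegsB, sumLen, List.map_map, Finset.sum_map_toList, ← hβB]
    rfl
  have hIco : Set.Ico (0:ℝ) ((P B).toReal) ⊆ {x | Lf x + δ ≤ Hf x} ∩ Set.Ici 0 := by
    intro x hx
    obtain ⟨p, hp, h1, h2⟩ := psf_pair segsB (segsHl ++ segsLl) x
      (fun p hp => by
        rw [hsegsB] at hp
        obtain ⟨v, hv, rfl⟩ := List.mem_map.mp hp
        exact hβnn v)
      hx.1 (by rw [hsumlenB]; exact hx.2)
    rw [hsegsB] at hp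
    obtain ⟨v, hv, rfl⟩ := List.mem_map.mp hp
    have hvV : v ∈ V := Finset.mem_toList.mp hv
    have hH : Hf x = mx v := by rw [hHf, hsegs]; exact h1
    have hL : Lf x = mn v := by rw [hLf, hsegs]; exact h2
    refine ⟨?_, hx.1⟩
    show Lf x + δ ≤ Hf x
    rw [hH, hL]
    exact hV_gap v hvV
  have hofreal : ENNReal.ofReal ((P B).toReal) ≤
      volume ({x | Lf x + δ ≤ Hf x} ∩ Set.Ici 0) := by
    calc ENNReal.ofReal ((P B).toReal) = volume (Set.Ico (0:ℝ) ((P B).toReal)) := by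
          rw [Real.volume_Ico, sub_zero]
      _ ≤ _ := measure_mono hIco
  have hfin : volume ({x | Lf x + δ ≤ Hf x} ∩ Set.Ici 0) ≠ ⊤ := by
    have hsub : {x | Lf x + δ ≤ Hf x} ∩ Set.Ici 0 ⊆ {x | 1/2 < Hf x} ∩ Set.Ici 0 := by
      rintro x ⟨hx1, hx2⟩
      refine ⟨?_, hx2⟩
      have := (hLb x).1
      simp only [Set.mem_setOf_eq] at hx1 ⊢
      linarith
    intro htop
    have : volume ({x | 1/2 < Hf x} ∩ Set.Ici 0) = ⊤ :=
      top_le_iff.mp (htop ▸ measure_mono hsub)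
    have h2 : ((n : ℝ≥0∞)/2) = ⊤ := top_le_iff.mp (by
      rw [← this]
      exact le_trans le_self_add hcond3)
    have : ((n : ℝ≥0∞)/2) ≠ ⊤ := by
      refine (ENNReal.div_lt_top ?_ ?_).ne
      · exact ENNReal.natCast_ne_top n
      · norm_num
    exact this h2
  refine ⟨Hf, Lf, ⟨?_, ?_, ?_, hcond3, hcond4⟩, ?_⟩
  · intro x _
    exact ⟨(hLb x).1, (hLb x).2, (hHb x).1, (hHb x).2⟩
  · rw [hHf]
    exact psf_isRCStep _ hsegH_len
  · rw [hLf]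
    exact psf_isRCStep _ hsegL_len
  · rw [hPBX]
    have := ENNReal.toReal_mono hfin hofreal
    rwa [ENNReal.toReal_ofReal ENNReal.toReal_nonneg] at this




end KeyLemma

theorem reduction_to_HL (n : ℕ) (hn : 2 ≤ n) (δ : ℝ)
    (hδ : δ ∈ Set.Ioc (1 / 2 : ℝ) 1) :
    sSup {p : ℝ | ∃ (Ω : Type) (mΩ : MeasurableSpace Ω) (P : Measure Ω),
        IsProbabilityMeasure P ∧ ∃ (m : ℕ) (X : Fin n → Ω → ℝ) (A : Set Ω),
          1 ≤ m ∧ MemC'With P X A m ∧ p = (P (maxEvent X δ ∩ A)).toReal} ≤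
      sSup {p : ℝ | ∃ H L : ℝ → ℝ, Lam n H L ∧
        p = (volume ({x | L x + δ ≤ H x} ∩ Set.Ici 0)).toReal} := by
  have hbdd : BddAbove {p : ℝ | ∃ H L : ℝ → ℝ, Lam n H L ∧
      p = (volume ({x | L x + δ ≤ H x} ∩ Set.Ici 0)).toReal} := by
    refine ⟨(n:ℝ)/2, ?_⟩
    rintro p ⟨H, L, hHL, rfl⟩
    have hsub : {x | L x + δ ≤ H x} ∩ Set.Ici 0 ⊆ {x | 1/2 < H x} ∩ Set.Ici 0 := by
      rintro x ⟨hx1, hx2⟩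
      refine ⟨?_, hx2⟩
      have h0 := (hHL.1 x hx2).1
      have h1 := hδ.1
      simp only [Set.mem_setOf_eq] at hx1 ⊢
      linarith
    have h1 : volume ({x | L x + δ ≤ H x} ∩ Set.Ici 0) ≤ (n:ℝ≥0∞)/2 :=
      le_trans (measure_mono hsub) (le_trans le_self_add hHL.2.2.2.1)
    have h2 : ((n:ℝ≥0∞)/2) ≠ ⊤ :=
      (ENNReal.div_lt_top (ENNReal.natCast_ne_top n) (by norm_num)).ne
    calc (volume ({x | L x + δ ≤ H x} ∩ Set.Ici 0)).toReal
        ≤ ((n:ℝ≥0∞)/2).toReal := ENNReal.toReal_mono h2 h1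
      _ = (n:ℝ)/2 := by
          rw [ENNReal.toReal_div]
          simp
  have hzero : (0:ℝ) ∈ {p : ℝ | ∃ H L : ℝ → ℝ, Lam n H L ∧
      p = (volume ({x | L x + δ ≤ H x} ∩ Set.Ici 0)).toReal} := by
    refine ⟨fun _ => 1/2, fun _ => 1/2, ⟨?_, ?_, ?_, ?_, ?_⟩, ?_⟩
    · intro x _
      norm_num
    · exact StepGadget.psf_isRCStep [] (by simp)
    · exact StepGadget.psf_isRCStep [] (by simp)
    · have h1 : {x : ℝ | (1:ℝ)/2 < 1/2} = ∅ := by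
        ext x; simp
      have h2 : {x : ℝ | (1:ℝ)/2 < 1/2} ∩ Set.Ici 0 = ∅ := by rw [h1]; simp
      have h3 : {x : ℝ | (1:ℝ)/2 < 1/2} ∩ Set.Ici 0 = {x : ℝ | (1:ℝ)/2 < 1/2} ∩ Set.Ici 0 := rfl
      show volume ({x : ℝ | (1:ℝ)/2 < 1/2} ∩ Set.Ici 0) +
        volume ({x : ℝ | (1:ℝ)/2 < 1/2} ∩ Set.Ici 0) ≤ (n : ℝ≥0∞)/2
      rw [h2]
      simp
    · intro y hy
      by_cases hy2 : y = 1/2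
      · subst hy2
        norm_num
      · have h1 : {x : ℝ | (1:ℝ)/2 = y} ∩ Set.Ici 0 = ∅ := by
          ext x
          simp only [Set.mem_inter_iff, Set.mem_setOf_eq, Set.mem_empty_iff_false, iff_false,
            not_and]
          intro h
          exact absurd h.symm hy2
        have h2 : {x : ℝ | (1:ℝ)/2 = 1 - y} ∩ Set.Ici 0 = ∅ := by
          ext x
          simp only [Set.mem_inter_iff, Set.mem_setOf_eq, Set.mem_empty_iff_false, iff_false,
            not_and]
          intro h
          exact absurd (by linarith : y = 1/2) hy2
        show ENNReal.ofReal ((1 - y) / y) *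
            (volume ({x : ℝ | (1:ℝ)/2 = y} ∩ Set.Ici 0) +
              volume ({x : ℝ | (1:ℝ)/2 = y} ∩ Set.Ici 0)) =
          volume ({x : ℝ | (1:ℝ)/2 = 1 - y} ∩ Set.Ici 0) +
            volume ({x : ℝ | (1:ℝ)/2 = 1 - y} ∩ Set.Ici 0)
        rw [h1, h2]
        simp
    · have h1 : {x : ℝ | (1:ℝ)/2 + δ ≤ 1/2} ∩ Set.Ici 0 = ∅ := by
        ext x
        simp only [Set.mem_inter_iff, Set.mem_setOf_eq, Set.mem_empty_iff_false, iff_false,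
          not_and]
        intro h
        linarith [hδ.1]
      show (0:ℝ) = (volume ({x : ℝ | (1:ℝ)/2 + δ ≤ 1/2} ∩ Set.Ici 0)).toReal
      rw [h1]
      simp
  refine Real.sSup_le ?_ (le_csSup hbdd hzero)
  rintro p ⟨Ω, mΩ, P, hP, m, X, A, hm, hC, rfl⟩
  haveI := hP
  obtain ⟨H, L, hHL, hle⟩ := key_lemma n hn δ hδ P m X A hC
  exact le_trans hle (le_csSup hbdd ⟨H, L, hHL, rfl⟩)
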